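/- For all φ₀, φ₁ with 0 < φ₀ < φ₁ < π/2, the map α ↦ T₁(α, φ₀) − T₁(α, φ₁) is strictly increasing on (φ₁, π/2); this follows from the sign of the mixed second derivative ∂²T₁/∂φ∂α = −sin 2α/(cos 2φ − cos 2α)^{3/2} < 0 for 0 < φ < α < π/2. -/

import Mathlib

open Real

/-- The time map `T₁(α, φ) = ∫₀^φ dx / √(cos 2x − cos 2α)`. -/
noncomputable def timeMapT1 (α φ : ℝ) : ℝ :=
  ∫ x in (0:ℝ)..φ, 1 / Real.sqrt (Real.cos (2 * x) - Real.cos (2 * α))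

lemma timeMapT1_pos_aux {x α : ℝ} (hx0 : 0 ≤ x) (hxα : x < α) (hα : α < π / 2) :
    0 < Real.cos (2 * x) - Real.cos (2 * α) := by
  have h := Real.cos_lt_cos_of_nonneg_of_le_pi (by linarith) (by linarith)
    (by linarith : 2 * x < 2 * α)
  linarith

lemma timeMapT1_deriv_aux {φ α : ℝ} (hφ : 0 < φ) (hφα : φ < α) (hα : α < π / 2) :
    HasDerivAt (fun a => 1 / Real.sqrt (Real.cos (2 * φ) - Real.cos (2 * a)))
      (-Real.sin (2 * α) / (Real.cos (2 * φ) - Real.cos (2 * α)) ^ ((3:ℝ)/2)) α := by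
  set y : ℝ → ℝ := fun a => Real.cos (2 * φ) - Real.cos (2 * a) with hy
  have hyα : 0 < y α := timeMapT1_pos_aux hφ.le hφα hα
  have hder : HasDerivAt y (2 * Real.sin (2 * α)) α := by
    have h2 : HasDerivAt (fun a : ℝ => 2 * a) 2 α := by
      simpa using (hasDerivAt_id α).const_mul (2:ℝ)
    have := (h2.cos).const_sub (Real.cos (2 * φ))
    refine this.congr_deriv ?_
    ring
  have hrpow : HasDerivAt (fun a => (y a) ^ (-(1/2) : ℝ))
      (2 * Real.sin (2 * α) * (-(1/2)) * (y α) ^ ((-(1/2):ℝ) - 1)) α :=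
    hder.rpow_const (Or.inl hyα.ne')
  have heq : (fun a => 1 / Real.sqrt (Real.cos (2 * φ) - Real.cos (2 * a)))
      =ᶠ[nhds α] (fun a => (y a) ^ (-(1/2) : ℝ)) := by
    have hcont : ContinuousAt y α := by fun_prop
    filter_upwards [hcont.eventually (lt_mem_nhds hyα : ∀ᶠ t in nhds (y α), 0 < t)] with a ha
    rw [Real.sqrt_eq_rpow, Real.rpow_neg ha.le, one_div]
  have := hrpow.congr_of_eventuallyEq heq
  refine this.congr_deriv ?_
  have h32 : ((-(1/2):ℝ) - 1) = -((3:ℝ)/2) := by norm_num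
  rw [h32, Real.rpow_neg hyα.le]
  ring

lemma timeMapT1_mono_aux (φ₀ φ₁ : ℝ) (h₀ : 0 < φ₀) (h₀₁ : φ₀ < φ₁) :
    StrictMonoOn (fun α => (∫ x in (0:ℝ)..φ₀, 1 / Real.sqrt (Real.cos (2*x) - Real.cos (2*α)))
        - ∫ x in (0:ℝ)..φ₁, 1 / Real.sqrt (Real.cos (2*x) - Real.cos (2*α)))
      (Set.Ioo φ₁ (π / 2)) := by
  have hcont : ∀ α ∈ Set.Ioo φ₁ (π/2), ∀ a b : ℝ, Set.uIcc a b ⊆ Set.Icc 0 φ₁ →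
      IntervalIntegrable (fun x => 1 / Real.sqrt (Real.cos (2*x) - Real.cos (2*α)))
        MeasureTheory.volume a b := by
    intro α hα a b hab
    apply ContinuousOn.intervalIntegrable
    apply ContinuousOn.mono _ hab
    apply ContinuousOn.div continuousOn_const
    · fun_prop
    · intro x hx
      exact (Real.sqrt_pos.mpr (timeMapT1_pos_aux hx.1 (lt_of_le_of_lt hx.2 hα.1) hα.2)).ne'
  have key : ∀ α ∈ Set.Ioo φ₁ (π/2),
      (∫ x in (0:ℝ)..φ₀, 1 / Real.sqrt (Real.cos (2*x) - Real.cos (2*α)))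
        - ∫ x in (0:ℝ)..φ₁, 1 / Real.sqrt (Real.cos (2*x) - Real.cos (2*α))
      = - ∫ x in φ₀..φ₁, 1 / Real.sqrt (Real.cos (2*x) - Real.cos (2*α)) := by
    intro α hα
    have h1 := intervalIntegral.integral_add_adjacent_intervals
      (hcont α hα 0 φ₀ (by rw [Set.uIcc_of_le h₀.le]; exact Set.Icc_subset_Icc le_rfl h₀₁.le))
      (hcont α hα φ₀ φ₁ (by rw [Set.uIcc_of_le h₀₁.le]; exact Set.Icc_subset_Icc h₀.le le_rfl))
    linarith
  intro a ha b hb hab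
  simp only
  rw [key a ha, key b hb, neg_lt_neg_iff, ← sub_pos, ← intervalIntegral.integral_sub
    (hcont a ha φ₀ φ₁ (by rw [Set.uIcc_of_le h₀₁.le]; exact Set.Icc_subset_Icc h₀.le le_rfl))
    (hcont b hb φ₀ φ₁ (by rw [Set.uIcc_of_le h₀₁.le]; exact Set.Icc_subset_Icc h₀.le le_rfl))]
  apply intervalIntegral.intervalIntegral_pos_of_pos_on
  · exact IntervalIntegrable.sub
      (hcont a ha φ₀ φ₁ (by rw [Set.uIcc_of_le h₀₁.le]; exact Set.Icc_subset_Icc h₀.le le_rfl))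
      (hcont b hb φ₀ φ₁ (by rw [Set.uIcc_of_le h₀₁.le]; exact Set.Icc_subset_Icc h₀.le le_rfl))
  · intro x hx
    have hA : 0 < Real.cos (2*x) - Real.cos (2*a) :=
      timeMapT1_pos_aux (by linarith [hx.1]) (by linarith [hx.2, ha.1]) ha.2
    have hB : Real.cos (2*b) < Real.cos (2*a) := by
      exact Real.cos_lt_cos_of_nonneg_of_le_pi (by linarith [hx.1, ha.1] : (0:ℝ) ≤ 2*a)
        (by linarith [hb.2] : 2*b ≤ π) (by linarith)
    have hAB : Real.cos (2*x) - Real.cos (2*a) < Real.cos (2*x) - Real.cos (2*b) := by linarith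
    have h1 : Real.sqrt (Real.cos (2*x) - Real.cos (2*a)) <
        Real.sqrt (Real.cos (2*x) - Real.cos (2*b)) :=
      Real.sqrt_lt_sqrt hA.le hAB
    have h2 : 0 < Real.sqrt (Real.cos (2*x) - Real.cos (2*a)) := Real.sqrt_pos.mpr hA
    have := one_div_lt_one_div_of_lt h2 h1
    linarith
  · exact h₀₁

/-- For `0 < φ₀ < φ₁ < π/2`, the map `α ↦ T₁(α, φ₀) − T₁(α, φ₁)` is strictly
increasing on `(φ₁, π/2)`; this follows from the sign of the mixed second
derivative `∂²T₁/∂φ∂α = −sin 2α/(cos 2φ − cos 2α)^{3/2} < 0` for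
`0 < φ < α < π/2` (here `∂T₁/∂φ` is the integrand `1/√(cos 2φ − cos 2α)`). -/
theorem timeMapT1_difference_strictMono (φ₀ φ₁ : ℝ) (h₀ : 0 < φ₀)
    (h₀₁ : φ₀ < φ₁) (h₁ : φ₁ < π / 2) :
    StrictMonoOn (fun α => timeMapT1 α φ₀ - timeMapT1 α φ₁)
      (Set.Ioo φ₁ (π / 2)) ∧
    ∀ φ α : ℝ, 0 < φ → φ < α → α < π / 2 →
      HasDerivAt (fun a => 1 / Real.sqrt (Real.cos (2 * φ) - Real.cos (2 * a)))
        (-Real.sin (2 * α) / (Real.cos (2 * φ) - Real.cos (2 * α)) ^ ((3:ℝ)/2)) α ∧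
      -Real.sin (2 * α) / (Real.cos (2 * φ) - Real.cos (2 * α)) ^ ((3:ℝ)/2) < 0 := by
  constructor
  · simpa [timeMapT1] using timeMapT1_mono_aux φ₀ φ₁ h₀ h₀₁
  · intro φ α hφ hφα hα
    refine ⟨timeMapT1_deriv_aux hφ hφα hα, ?_⟩
    have hy : 0 < Real.cos (2 * φ) - Real.cos (2 * α) := timeMapT1_pos_aux hφ.le hφα hα
    have hs : 0 < Real.sin (2 * α) :=
      Real.sin_pos_of_pos_of_lt_pi (by linarith) (by linarith)
    exact div_neg_of_neg_of_pos (by linarith) (Real.rpow_pos_of_pos hy _)
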